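/- Let f(s) = log(1+exp(s)). For any J ∈ ℝ and ε > 0, and any nonempty B ⊆ V, there exist w ∈ ℝ^V with w_i = 0 for i ∉ B, and c ∈ ℝ, such that the Möbius coefficient K_B(w,c) = ∑_{C ⊆ B} (-1)^{|B\C|} f(∑_{i∈C} w_i + c) satisfies |K_B(w,c) − J| < ε. -/
import Mathlib


open Finset

noncomputable def softplusCoeff {V : Type*} [DecidableEq V]
    (w : V → ℝ) (c : ℝ) (B : Finset V) : ℝ :=
  ∑ C ∈ B.powerset, (-1 : ℝ) ^ ((B \ C).card) * Real.log (1 + Real.exp (∑ i ∈ C, w i + c))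

lemma softplus_log_exp (p : ℝ) (hp : 0 < p) :
    Real.log (1 + Real.exp (Real.log (Real.exp p - 1))) = p := by
  have h1 : 1 < Real.exp p := by
    rw [← Real.exp_zero]; exact Real.exp_lt_exp.mpr hp
  rw [Real.exp_log (by linarith)]
  rw [show 1 + (Real.exp p - 1) = Real.exp p by ring, Real.log_exp]

lemma softplusCoeff_congr {V : Type*} [DecidableEq V] (w w' : V → ℝ) (c : ℝ)
    (B : Finset V) (h : ∀ i ∈ B, w i = w' i) :
    softplusCoeff w c B = softplusCoeff w' c B := by
  unfold softplusCoeff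
  refine Finset.sum_congr rfl fun C hC => ?_
  rw [mem_powerset] at hC
  have : ∑ i ∈ C, w i = ∑ i ∈ C, w' i :=
    Finset.sum_congr rfl fun i hi => h i (hC hi)
  rw [this]

lemma softplusCoeff_tendsto {V : Type*} [DecidableEq V] (w : V → ℝ) (B : Finset V) :
    Filter.Tendsto (fun c => softplusCoeff w c B) Filter.atBot (nhds 0) := by
  unfold softplusCoeff
  have h0 : (0 : ℝ) = ∑ C ∈ B.powerset, 0 := by simp
  rw [h0]
  refine tendsto_finset_sum _ fun C _ => ?_
  have h1 : Filter.Tendsto (fun c : ℝ => ∑ i ∈ C, w i + c) Filter.atBot Filter.atBot := by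
    exact Filter.tendsto_atBot_add_const_left _ _ Filter.tendsto_id
  have h2 : Filter.Tendsto (fun c : ℝ => Real.exp (∑ i ∈ C, w i + c))
      Filter.atBot (nhds 0) := Real.tendsto_exp_atBot.comp h1
  have h3 : Filter.Tendsto (fun c : ℝ => Real.log (1 + Real.exp (∑ i ∈ C, w i + c)))
      Filter.atBot (nhds 0) := by
    have h4 : Filter.Tendsto (fun c : ℝ => 1 + Real.exp (∑ i ∈ C, w i + c))
        Filter.atBot (nhds 1) := by
      have := h2.const_add (1 : ℝ)
      simpa using this
    have h5 : Filter.Tendsto Real.log (nhds 1) (nhds 0) := by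
      have := (Real.continuousAt_log (by norm_num : (1:ℝ) ≠ 0)).tendsto
      simpa using this
    exact h5.comp h4
  have := h3.const_mul ((-1 : ℝ) ^ (B \ C).card)
  simpa using this

lemma softplusCoeff_insert {V : Type*} [DecidableEq V] (w : V → ℝ) (c : ℝ)
    (a : V) (B : Finset V) (h : a ∉ B) :
    softplusCoeff w c (insert a B) =
      softplusCoeff w (c + w a) B - softplusCoeff w c B := by
  unfold softplusCoeff
  rw [Finset.sum_powerset_insert h]
  have h1 : ∀ C ∈ B.powerset,
      (-1 : ℝ) ^ ((insert a B \ C).card) * Real.log (1 + Real.exp (∑ i ∈ C, w i + c)) =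
      -((-1 : ℝ) ^ ((B \ C).card) * Real.log (1 + Real.exp (∑ i ∈ C, w i + c))) := by
    intro C hC
    rw [mem_powerset] at hC
    have haC : a ∉ C := fun hc => h (hC hc)
    have : insert a B \ C = insert a (B \ C) := by
      rw [Finset.insert_sdiff_of_notMem _ haC]
    rw [this, Finset.card_insert_of_notMem (fun hc => h (Finset.mem_sdiff.mp hc).1)]
    rw [pow_succ]
    ring
  have h2 : ∀ C ∈ B.powerset,
      (-1 : ℝ) ^ ((insert a B \ insert a C).card) *
        Real.log (1 + Real.exp (∑ i ∈ insert a C, w i + c)) =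
      (-1 : ℝ) ^ ((B \ C).card) *
        Real.log (1 + Real.exp (∑ i ∈ C, w i + (c + w a))) := by
    intro C hC
    rw [mem_powerset] at hC
    have haC : a ∉ C := fun hc => h (hC hc)
    have hcard : (insert a B \ insert a C).card = (B \ C).card := by
      rw [Finset.card_sdiff_of_subset (Finset.insert_subset_insert _ hC),
        Finset.card_sdiff_of_subset hC,
        Finset.card_insert_of_notMem h, Finset.card_insert_of_notMem haC]
      omega
    rw [hcard, Finset.sum_insert haC]
    ring_nf
  rw [Finset.sum_congr rfl h1, Finset.sum_congr rfl h2, Finset.sum_neg_distrib]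
  ring

lemma younes_aux {V : Type*} [DecidableEq V] (B : Finset V) (hB : B.Nonempty) :
    ∀ J ε : ℝ, 0 < ε → ∃ (w : V → ℝ) (c : ℝ),
      (∀ i, i ∉ B → w i = 0) ∧ |softplusCoeff w c B - J| < ε := by
  induction hB using Finset.Nonempty.cons_induction with
  | singleton a =>
    intro J ε hε
    set p : ℝ := |J| + 1 with hp
    set q : ℝ := |J| + 1 - J with hq
    have hppos : 0 < p := by have := abs_nonneg J; linarith
    have hqpos : 0 < q := by have := le_abs_self J; simp only [hq]; linarith
    set c : ℝ := Real.log (Real.exp q - 1) with hc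
    set s : ℝ := Real.log (Real.exp p - 1) with hs
    refine ⟨fun j => if j = a then s - c else 0, c, ?_, ?_⟩
    · intro i hi
      simp only [Finset.mem_singleton] at hi
      simp [hi]
    · have hps : softplusCoeff (fun j => if j = a then s - c else 0) c {a} =
          Real.log (1 + Real.exp s) - Real.log (1 + Real.exp c) := by
        unfold softplusCoeff
        rw [show ({a} : Finset V) = insert a ∅ from rfl,
          Finset.sum_powerset_insert (Finset.notMem_empty a)]
        simp
        ring
      rw [hps, softplus_log_exp p hppos, softplus_log_exp q hqpos]
      have : p - q - J = 0 := by rw [hp, hq]; ring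
      rw [this]
      simpa using hε
  | cons a B ha hBne ih =>
    intro J ε hε
    obtain ⟨w', c', hw'supp, hw'⟩ := ih J (ε / 2) (by linarith)
    have htend := softplusCoeff_tendsto w' B
    have hev : ∀ᶠ c in Filter.atBot, |softplusCoeff w' c B| < ε / 2 := by
      have := htend (Metric.ball_mem_nhds (0 : ℝ) (by linarith : (0:ℝ) < ε / 2))
      filter_upwards [this] with c hc
      simpa [Real.dist_eq] using hc
    obtain ⟨c, hc⟩ := hev.exists
    set u : ℝ := c' - c with hu
    set w : V → ℝ := Function.update w' a u with hw
    refine ⟨w, c, ?_, ?_⟩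
    · intro i hi
      rw [Finset.cons_eq_insert, Finset.mem_insert] at hi
      push_neg at hi
      rw [hw, Function.update_of_ne hi.1]
      exact hw'supp i hi.2
    · have hagree : ∀ i ∈ B, w i = w' i := by
        intro i hi
        have hia : i ≠ a := by rintro rfl; exact ha hi
        rw [hw, Function.update_of_ne hia]
      have hwa : w a = u := by rw [hw]; simp
      rw [Finset.cons_eq_insert, softplusCoeff_insert w c a B ha, hwa]
      rw [softplusCoeff_congr w w' _ _ hagree, softplusCoeff_congr w w' _ _ hagree]
      have hcu : c + u = c' := by rw [hu]; ring
      rw [hcu]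
      have h1 : |softplusCoeff w' c' B - softplusCoeff w' c B - J| ≤
          |softplusCoeff w' c' B - J| + |softplusCoeff w' c B| := by
        calc |softplusCoeff w' c' B - softplusCoeff w' c B - J|
            = |(softplusCoeff w' c' B - J) + (-(softplusCoeff w' c B))| := by ring_nf
          _ ≤ |softplusCoeff w' c' B - J| + |(-(softplusCoeff w' c B))| := abs_add_le _ _
          _ = |softplusCoeff w' c' B - J| + |softplusCoeff w' c B| := by rw [abs_neg]
      linarith

theorem younes_lemma
    {V : Type*} [Fintype V] [DecidableEq V]
    (B : Finset V) (hB : B.Nonempty) (J : ℝ) (ε : ℝ) (hε : 0 < ε) :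
    ∃ (w : V → ℝ) (c : ℝ),
      (∀ i, i ∉ B → w i = 0) ∧ |softplusCoeff w c B - J| < ε :=
  younes_aux B hB J ε hε
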